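/- For λ ∈ (0,1), p₀, p₁ > 0 and |x₀|, |x₁| > 0, define β = λ p₀ |x₁| / ((1−λ) p₁ |x₀| + λ p₀ |x₁|) ∈ (0,1) and p_λ by p_λ u_λ = (1−β) p₀ u₀ + β p₁ u₁ where u_i = x_i/|x_i| and x_λ = (1−λ)x₀ + λx₁, u_λ = x_λ/|x_λ|, with x₀, x₁ linearly independent in a real inner product space. Then p_λ/|x_λ| equals the weighted harmonic mean ( (1−λ)(p₀/|x₀|)⁻¹ + λ(p₁/|x₁|)⁻¹ )⁻¹. -/

import Mathlib

open Set

/-- The key harmonic-mean computation in the generalized Busemann theorem: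
if `p_λ u_λ = (1-β) p₀ u₀ + β p₁ u₁` with
`β = λ p₀ |x₁| / ((1-λ) p₁ |x₀| + λ p₀ |x₁|)`, then
`p_λ/|x_λ| = ((1-λ)(p₀/|x₀|)⁻¹ + λ(p₁/|x₁|)⁻¹)⁻¹`. -/
theorem busemann_harmonic_mean
    {V : Type*} [NormedAddCommGroup V] [InnerProductSpace ℝ V]
    (x₀ x₁ : V) (hind : LinearIndependent ℝ ![x₀, x₁])
    (p₀ p₁ : ℝ) (hp₀ : 0 < p₀) (hp₁ : 0 < p₁)
    (l : ℝ) (hl : l ∈ Set.Ioo (0 : ℝ) 1)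
    (β : ℝ) (hβ : β = l * p₀ * ‖x₁‖ / ((1 - l) * p₁ * ‖x₀‖ + l * p₀ * ‖x₁‖))
    (u₀ u₁ : V) (hu₀ : u₀ = ‖x₀‖⁻¹ • x₀) (hu₁ : u₁ = ‖x₁‖⁻¹ • x₁)
    (xl : V) (hxl : xl = (1 - l) • x₀ + l • x₁)
    (ul : V) (hul : ul = ‖xl‖⁻¹ • xl)
    (pl : ℝ) (hpl : pl • ul = (1 - β) • (p₀ • u₀) + β • (p₁ • u₁)) :
    pl / ‖xl‖ = ((1 - l) * (p₀ / ‖x₀‖)⁻¹ + l * (p₁ / ‖x₁‖)⁻¹)⁻¹ := by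
  obtain ⟨hl0, hl1⟩ := hl
  have h1l : (0:ℝ) < 1 - l := by linarith
  have h0 : x₀ ≠ 0 := hind.ne_zero 0
  have h1 : x₁ ≠ 0 := by have := hind.ne_zero 1; simpa using this
  have n0 : (0:ℝ) < ‖x₀‖ := norm_pos_iff.mpr h0
  have n1 : (0:ℝ) < ‖x₁‖ := norm_pos_iff.mpr h1
  have hxl0 : xl ≠ 0 := by
    intro h
    have := (LinearIndependent.pair_iff.mp hind (1 - l) l (by rw [← hxl, h])).1
    linarith
  have nl : (0:ℝ) < ‖xl‖ := norm_pos_iff.mpr hxl0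
  have hD : (0:ℝ) < (1 - l) * p₁ * ‖x₀‖ + l * p₀ * ‖x₁‖ := by
    nlinarith [mul_pos (mul_pos h1l hp₁) n0, mul_pos (mul_pos hl0 hp₀) n1]
  have key := hpl
  rw [hul, hu₀, hu₁] at key
  simp only [smul_smul] at key
  nth_rewrite 2 [hxl] at key
  simp only [smul_add, smul_smul] at key
  have key2 : (pl * ‖xl‖⁻¹ * (1 - l) - (1 - β) * (p₀ * ‖x₀‖⁻¹)) • x₀
      + (pl * ‖xl‖⁻¹ * l - β * (p₁ * ‖x₁‖⁻¹)) • x₁ = 0 := by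
    linear_combination (norm := module) key
  have hc : pl * ‖xl‖⁻¹ * (1 - l) - (1 - β) * (p₀ * ‖x₀‖⁻¹) = 0 :=
    (LinearIndependent.pair_iff.mp hind _ _ key2).1
  have hβ' : 1 - β = (1 - l) * p₁ * ‖x₀‖ / ((1 - l) * p₁ * ‖x₀‖ + l * p₀ * ‖x₁‖) := by
    rw [hβ]; field_simp; ring
  rw [hβ', sub_eq_zero] at hc
  field_simp at hc ⊢
  have hne : ((1 - l) * ‖x₀‖ : ℝ) ≠ 0 := by positivity
  linear_combination hc
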